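/- arXiv:1803.04949 — 3 statements merged into one kernel-verified Lean document; each statement's English description precedes it below -/
import Mathlib

section
/- Let G be a finite abelian group of odd order with exponent e, and let q : G → circle be a non-degenerate quadratic form (meaning q(n·g) = q(g)^(n²) for all n ∈ ℤ and ∂q(g,h) = q(g)q(h)q(g+h)⁻¹ is a non-degenerate symmetric bicharacter). Then the map b(g,h) := ∂q(g,h)^((e+1)/2) is a non-degenerate symmetric bicharacter on G satisfying b(g,g) = q(g)⁻¹ for all g ∈ G. -/
/-- If `G` is a finite abelian group of odd order with exponent `e` and
`q` is a non-degenerate quadratic form on `G`, then `b g h := (∂q g h) ^ ((e+1)/2)`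
is a non-degenerate symmetric bicharacter with `b g g = (q g)⁻¹`. -/
theorem stmt2 {G : Type*} [AddCommGroup G] [Fintype G]
    (hodd : Odd (Fintype.card G))
    (q : G → Circle)
    (hq : ∀ (n : ℤ) (g : G), q (n • g) = q g ^ (n ^ 2))
    (hbi : ∀ g h k : G,
      q (g + h) * q k * (q (g + h + k))⁻¹ =
        (q g * q k * (q (g + k))⁻¹) * (q h * q k * (q (h + k))⁻¹))
    (hnd : ∀ g : G, (∀ h, q g * q h * (q (g + h))⁻¹ = 1) → g = 0) :
    let e : ℕ := AddMonoid.exponent G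
    let b : G → G → Circle := fun g h => (q g * q h * (q (g + h))⁻¹) ^ ((e + 1) / 2)
    (∀ g h, b g h = b h g) ∧
    (∀ g h k, b (g + h) k = b g k * b h k) ∧
    (∀ g, (∀ h, b g h = 1) → g = 0) ∧
    (∀ g, b g g = (q g)⁻¹) := by
  intro e b
  set B : G → G → Circle := fun g h => q g * q h * (q (g + h))⁻¹ with hBdef
  have hq0 : q 0 = 1 := by simpa using hq 0 0
  have hsymm : ∀ g h : G, B g h = B h g := by
    intro g h
    simp only [hBdef]
    rw [add_comm, mul_comm (q g)]
  have hadd : ∀ g h k : G, B (g + h) k = B g k * B h k := hbi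
  have hB0 : ∀ g : G, B g 0 = 1 := by
    intro g
    simp [hBdef, hq0]
  have hadd' : ∀ g h k : G, B g (h + k) = B g h * B g k := by
    intro g h k
    rw [hsymm, hadd, hsymm h g, hsymm k g]
  have hpow : ∀ (g h : G) (n : ℕ), B g (n • h) = B g h ^ n := by
    intro g h n
    induction n with
    | zero => simpa using hB0 g
    | succ n ih => rw [succ_nsmul, hadd', ih, pow_succ]
  have hBe : ∀ g h : G, B g h ^ e = 1 := by
    intro g h
    rw [← hpow, AddMonoid.exponent_nsmul_eq_zero, hB0]
  have heodd : Odd e := by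
    have hdvd : e ∣ Fintype.card G := AddGroup.exponent_dvd_card
    rw [← Nat.not_even_iff_odd] at hodd ⊢
    intro h
    exact hodd ((even_iff_two_dvd.mpr ((even_iff_two_dvd.mp h).trans hdvd)))
  have h2m : 2 * ((e + 1) / 2) = e + 1 :=
    Nat.mul_div_cancel' (even_iff_two_dvd.mp heodd.add_one)
  have hBgg : ∀ g : G, B g g = (q g ^ 2)⁻¹ := by
    intro g
    have h2 : q (g + g) = q g ^ (4 : ℕ) := by
      have h := hq 2 g
      rw [two_zsmul] at h
      norm_num at h
      rw [h]
    simp only [hBdef]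
    rw [h2]
    group
  have hqe : ∀ g : G, q g ^ e = 1 := by
    intro g
    have h1 : q g ^ (e ^ 2) = 1 := by
      have h := hq (e : ℤ) g
      rw [natCast_zsmul, AddMonoid.exponent_nsmul_eq_zero, hq0] at h
      have : q g ^ (((e ^ 2 : ℕ) : ℤ)) = 1 := by push_cast; exact h.symm
      rwa [zpow_natCast] at this
    have h2 : q g ^ (2 * e) = 1 := by
      have h := hBe g g
      rw [hBgg, inv_pow, inv_eq_one, ← pow_mul] at h
      exact h
    have hcop : Nat.gcd e 2 = 1 := by
      have : ¬ (2 ∣ e) := by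
        rw [← even_iff_two_dvd, Nat.not_even_iff_odd]
        exact heodd
      exact Nat.Coprime.symm ((Nat.Prime.coprime_iff_not_dvd Nat.prime_two).mpr this)
    have hgcd : Nat.gcd (e ^ 2) (2 * e) = e := by
      rw [pow_two, mul_comm 2 e, Nat.gcd_mul_left, hcop, mul_one]
    have hdvd : orderOf (q g) ∣ e := by
      rw [← hgcd]
      exact Nat.dvd_gcd (orderOf_dvd_of_pow_eq_one h1) (orderOf_dvd_of_pow_eq_one h2)
    exact orderOf_dvd_iff_pow_eq_one.mp hdvd
  refine ⟨?_, ?_, ?_, ?_⟩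
  · intro g h
    show B g h ^ ((e + 1) / 2) = B h g ^ ((e + 1) / 2)
    rw [hsymm]
  · intro g h k
    show B (g + h) k ^ ((e + 1) / 2) = B g k ^ ((e + 1) / 2) * B h k ^ ((e + 1) / 2)
    rw [hadd, mul_pow]
  · intro g hg
    apply hnd
    intro h
    have hgh : B g h ^ ((e + 1) / 2) = 1 := hg h
    have : B g h ^ (e + 1) = 1 := by
      rw [← h2m, pow_mul', hgh, one_pow]
    calc B g h = B g h ^ (e + 1) * (B g h ^ e)⁻¹ := by
          rw [pow_succ, hBe, mul_comm, inv_mul_cancel_left]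
      _ = 1 := by rw [this, hBe, inv_one, mul_one]
  · intro g
    show B g g ^ ((e + 1) / 2) = (q g)⁻¹
    rw [hBgg, inv_pow, ← pow_mul, h2m, pow_succ, hqe, one_mul]
end

section
/- Let q : G → circle be a non-degenerate quadratic form on a finite abelian group G. Then |Σ_{g∈G} q(g)|² = |G|; i.e., the Gauss sum Σ_{g∈G} q(g) has absolute value √|G|. -/
/-- The Gauss sum of a non-degenerate quadratic form `q` on a finite
abelian group `G` has absolute value `√|G|`: `|Σ_{g∈G} q(g)|² = |G|`. -/
theorem stmt11 {G : Type*} [AddCommGroup G] [Fintype G]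
    (q : G → Circle)
    (hq : ∀ (n : ℤ) (g : G), q (n • g) = q g ^ (n ^ 2))
    (hbi : ∀ g h k : G,
      q (g + h) * q k * (q (g + h + k))⁻¹ =
        (q g * q k * (q (g + k))⁻¹) * (q h * q k * (q (h + k))⁻¹))
    (hnd : ∀ g : G, (∀ h, q g * q h * (q (g + h))⁻¹ = 1) → g = 0) :
    ‖∑ g : G, (q g : ℂ)‖ ^ 2 = Fintype.card G := by
  classical
  have hq0 : q 0 = 1 := by simpa using hq 0 0
  set B : G → G → Circle := fun g h => q g * q h * (q (g + h))⁻¹ with hBdef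
  have hBsymm : ∀ g h, B g h = B h g := by
    intro g h; simp only [hBdef]; rw [mul_comm (q g) (q h), add_comm]
  have hBadd : ∀ d h k, B d (h + k) = B d h * B d k := by
    intro d h k
    rw [hBsymm d (h + k), hBsymm d h, hBsymm d k]
    exact hbi h k d
  have hB0 : ∀ d, B d 0 = 1 := by
    intro d; simp [hBdef, hq0]
  -- the character h ↦ (B d h)⁻¹ as an AddChar into ℂ
  let ψ : G → AddChar G ℂ := fun d =>
    { toFun := fun h => (((B d h)⁻¹ : Circle) : ℂ)
      map_zero_eq_one' := by simp [hB0]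
      map_add_eq_mul' := by intro h k; push_cast [hBadd]; ring }
  have hψzero : ∀ d, ψ d = 0 ↔ d = 0 := by
    intro d
    constructor
    · intro h0
      refine hnd d fun h => ?_
      have := AddChar.eq_zero_iff.mp h0 h
      have : (((B d h)⁻¹ : Circle) : ℂ) = 1 := this
      have : (B d h)⁻¹ = 1 := Subtype.coe_injective (by exact_mod_cast this)
      simpa [inv_eq_one] using this
    · rintro rfl
      refine AddChar.eq_zero_iff.mpr fun h => ?_
      have : B 0 h = 1 := by rw [hBsymm]; exact hB0 h
      simp [ψ, this]
  -- main computation in ℂ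
  have key : (∑ g : G, (q g : ℂ)) * (starRingEnd ℂ) (∑ g : G, (q g : ℂ))
      = (Fintype.card G : ℂ) := by
    rw [map_sum]
    rw [Finset.sum_mul_sum]
    have step1 : ∀ h : G, ∑ g : G, (q g : ℂ) * (starRingEnd ℂ) (q h)
        = ∑ d : G, (q d : ℂ) * ψ d h := by
      intro h
      rw [← Fintype.sum_equiv (Equiv.addRight h)
        (fun d => (q d : ℂ) * ψ d h) (fun g => (q g : ℂ) * (starRingEnd ℂ) (q h))]
      intro d
      simp only [Equiv.coe_addRight]
      have hBval : ((q (d + h) : Circle) : ℂ) = (q d : ℂ) * (q h : ℂ) * (((B d h)⁻¹ : Circle) : ℂ) := by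
        have hB : ((B d h : Circle) : ℂ) = (q d : ℂ) * (q h : ℂ) * ((q (d + h) : ℂ))⁻¹ := by
          simp [hBdef]
        rw [Circle.coe_inv, hB]
        have h1 : (q d : ℂ) ≠ 0 := Circle.coe_ne_zero _
        have h2 : (q h : ℂ) ≠ 0 := Circle.coe_ne_zero _
        have h3 : (q (d + h) : ℂ) ≠ 0 := Circle.coe_ne_zero _
        field_simp
      have hψval : ψ d h = (((B d h)⁻¹ : Circle) : ℂ) := rfl
      have hne : (q h : ℂ) ≠ 0 := Circle.coe_ne_zero _
      rw [hψval, hBval, ← Circle.coe_inv_eq_conj, Circle.coe_inv]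
      field_simp
      ring_nf
      rw [Circle.coe_inv, mul_inv_cancel₀ hne]
    calc ∑ g : G, ∑ h : G, (q g : ℂ) * (starRingEnd ℂ) (q h)
        = ∑ h : G, ∑ g : G, (q g : ℂ) * (starRingEnd ℂ) (q h) := Finset.sum_comm
      _ = ∑ h : G, ∑ d : G, (q d : ℂ) * ψ d h := by
          exact Finset.sum_congr rfl fun h _ => step1 h
      _ = ∑ d : G, (q d : ℂ) * ∑ h : G, ψ d h := by
          rw [Finset.sum_comm]
          exact Finset.sum_congr rfl fun d _ => by rw [Finset.mul_sum]
      _ = ∑ d : G, (q d : ℂ) * (if d = 0 then (Fintype.card G : ℂ) else 0) := by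
          refine Finset.sum_congr rfl fun d _ => ?_
          rw [AddChar.sum_eq_ite (ψ d)]
          simp [hψzero d]
      _ = (Fintype.card G : ℂ) := by
          simp only [mul_ite, mul_zero]
          rw [Finset.sum_ite_eq' Finset.univ (0 : G)]
          simp [hq0]
  rw [Complex.mul_conj] at key
  rw [Complex.sq_norm]
  exact_mod_cast key
end

section
/- Let G be a finite abelian group of odd order with non-degenerate symmetric bicharacter b, and choose a partition G = G₊ ⊔ {0} ⊔ (−G₊). The generalized metaplectic fusion ring based on G, with basis {1, α, ρ, αρ} ∪ {σ_h : h ∈ G₊} and the fusion rules α² = 1, α·σ_g = σ_g, α·ρ = αρ, ρ² = 1 + Σ_{g∈G₊} σ_g, σ_g·σ_g = 1 + α + σ_{|2g|}, and σ_g·σ_h = σ_{|g+h|} + σ_{|g−h|} for g ≠ h in G₊ (with σ_0 interpreted as 1 + α), is a commutative associative unital ring of rank (|G|+7)/2. -/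
namespace MPFusion

variable {G : Type*} [AddCommGroup G] [DecidableEq G]

/-- The basis `{1, α, ρ, αρ} ∪ {σ_h : h ∈ G₊}` of the generalized metaplectic fusion
ring: `Sum.inl (a, r)` encodes `α^a ρ^r` and `Sum.inr h` encodes `σ_h`. -/
noncomputable def sig (Gpos : Finset G)
    (hpart : (0 : G) ∉ Gpos ∧ ∀ g : G, g ≠ 0 → Xor' (g ∈ Gpos) (-g ∈ Gpos))
    (x : G) : ((Bool × Bool) ⊕ {h : G // h ∈ Gpos}) →₀ ℤ :=
  if hx : x = 0 then
    Finsupp.single (Sum.inl (false, false)) 1 + Finsupp.single (Sum.inl (true, false)) 1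
  else
    Finsupp.single (Sum.inr ⟨if x ∈ Gpos then x else -x, by
      split_ifs with h
      · exact h
      · rcases hpart.2 x hx with h' | h'
        · exact absurd h'.1 h
        · exact h'.1⟩) 1

/-- Multiplication of basis elements of the generalized metaplectic fusion ring:
`α² = 1`, `α·ρ = αρ`, `α·σ_g = σ_g`, `ρ² = 1 + Σ_{g∈G₊} σ_g`,
`σ_g·σ_h = σ_{|g+h|} + σ_{|g-h|}` (with `σ_0 = 1 + α`, so in particular
`σ_g·σ_g = 1 + α + σ_{|2g|}`). -/
noncomputable def bmul [Fintype G] (Gpos : Finset G)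
    (hpart : (0 : G) ∉ Gpos ∧ ∀ g : G, g ≠ 0 → Xor' (g ∈ Gpos) (-g ∈ Gpos)) :
    ((Bool × Bool) ⊕ {h : G // h ∈ Gpos}) → ((Bool × Bool) ⊕ {h : G // h ∈ Gpos}) →
      ((Bool × Bool) ⊕ {h : G // h ∈ Gpos}) →₀ ℤ
  | Sum.inl (a, false), Sum.inl (b, r) => Finsupp.single (Sum.inl (xor a b, r)) 1
  | Sum.inl (a, true), Sum.inl (b, false) => Finsupp.single (Sum.inl (xor a b, true)) 1
  | Sum.inl (a, true), Sum.inl (b, true) =>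
      Finsupp.single (Sum.inl (xor a b, false)) 1 +
        ∑ h : {h : G // h ∈ Gpos}, Finsupp.single (Sum.inr h) 1
  | Sum.inl (_, false), Sum.inr h => Finsupp.single (Sum.inr h) 1
  | Sum.inl (_, true), Sum.inr _ =>
      Finsupp.single (Sum.inl (false, true)) 1 + Finsupp.single (Sum.inl (true, true)) 1
  | Sum.inr h, Sum.inl (_, false) => Finsupp.single (Sum.inr h) 1
  | Sum.inr _, Sum.inl (_, true) =>
      Finsupp.single (Sum.inl (false, true)) 1 + Finsupp.single (Sum.inl (true, true)) 1
  | Sum.inr g, Sum.inr h => sig Gpos hpart ((g : G) + h) + sig Gpos hpart ((g : G) - h)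

/-- The multiplication of the generalized metaplectic fusion ring, extended
`ℤ`-bilinearly. -/
noncomputable def mul [Fintype G] (Gpos : Finset G)
    (hpart : (0 : G) ∉ Gpos ∧ ∀ g : G, g ≠ 0 → Xor' (g ∈ Gpos) (-g ∈ Gpos))
    (x y : ((Bool × Bool) ⊕ {h : G // h ∈ Gpos}) →₀ ℤ) :
    ((Bool × Bool) ⊕ {h : G // h ∈ Gpos}) →₀ ℤ :=
  x.sum fun a xa => y.sum fun b yb => (xa * yb) • bmul Gpos hpart a b

end MPFusion


namespace MPFusion

variable {G : Type*} [AddCommGroup G] [DecidableEq G] [Fintype G]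
variable (Gpos : Finset G)
    (hpart : (0 : G) ∉ Gpos ∧ ∀ g : G, g ≠ 0 → Xor' (g ∈ Gpos) (-g ∈ Gpos))

local notation "B" => ((Bool × Bool) ⊕ {h : G // h ∈ Gpos})

-- basic linearity lemmas
lemma mul_zero' (x : B →₀ ℤ) : mul Gpos hpart x 0 = 0 := by
  simp [mul]

lemma zero_mul' (x : B →₀ ℤ) : mul Gpos hpart 0 x = 0 := by
  simp [mul]

lemma mul_add' (x y z : B →₀ ℤ) :
    mul Gpos hpart x (y + z) = mul Gpos hpart x y + mul Gpos hpart x z := by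
  unfold mul
  rw [← Finsupp.sum_add]
  apply Finsupp.sum_congr
  intro a _
  rw [Finsupp.sum_add_index'] <;> intros <;> simp [mul_add, add_smul]

lemma add_mul' (x y z : B →₀ ℤ) :
    mul Gpos hpart (x + y) z = mul Gpos hpart x z + mul Gpos hpart y z := by
  unfold mul
  rw [Finsupp.sum_add_index'] <;> intros <;> simp [← Finsupp.sum_add, add_mul, add_smul]

lemma smul_mul' (m : ℤ) (x y : B →₀ ℤ) :
    mul Gpos hpart (m • x) y = m • mul Gpos hpart x y := by
  unfold mul
  rw [Finsupp.sum_smul_index', Finsupp.smul_sum]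
  · apply Finsupp.sum_congr
    intro a _
    rw [Finsupp.smul_sum]
    apply Finsupp.sum_congr
    intro b _
    rw [smul_smul]
    congr 1
    rw [smul_eq_mul]; ring
  · intro a; simp

lemma mul_smul'' (m : ℤ) (x y : B →₀ ℤ) :
    mul Gpos hpart x (m • y) = m • mul Gpos hpart x y := by
  unfold mul
  rw [Finsupp.smul_sum]
  apply Finsupp.sum_congr
  intro a _
  rw [Finsupp.sum_smul_index', Finsupp.smul_sum]
  · apply Finsupp.sum_congr
    intro b _
    rw [smul_smul]
    congr 1
    rw [smul_eq_mul]; ring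
  · intro b; simp

lemma mul_single_single (a b : B) (m n : ℤ) :
    mul Gpos hpart (Finsupp.single a m) (Finsupp.single b n)
      = (m * n) • bmul Gpos hpart a b := by
  unfold mul
  rw [Finsupp.sum_single_index, Finsupp.sum_single_index] <;> simp

lemma mul_single_one (a b : B) :
    mul Gpos hpart (Finsupp.single a 1) (Finsupp.single b 1) = bmul Gpos hpart a b := by
  rw [mul_single_single]; simp

lemma mul_sum' {ι : Type*} (s : Finset ι) (f : ι → (B →₀ ℤ)) (x : B →₀ ℤ) :
    mul Gpos hpart x (∑ i ∈ s, f i) = ∑ i ∈ s, mul Gpos hpart x (f i) := by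
  classical
  induction s using Finset.induction with
  | empty => simp [mul_zero']
  | insert a s h ih => simp [Finset.sum_insert h, mul_add', ih]

lemma sum_mul' {ι : Type*} (s : Finset ι) (f : ι → (B →₀ ℤ)) (x : B →₀ ℤ) :
    mul Gpos hpart (∑ i ∈ s, f i) x = ∑ i ∈ s, mul Gpos hpart (f i) x := by
  classical
  induction s using Finset.induction with
  | empty => simp [zero_mul']
  | insert a s h ih => simp [Finset.sum_insert h, add_mul', ih]

end MPFusion

set_option linter.unusedSectionVars false
namespace MPFusion

variable {G : Type*} [AddCommGroup G] [DecidableEq G] [Fintype G]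
variable (Gpos : Finset G)
    (hpart : (0 : G) ∉ Gpos ∧ ∀ g : G, g ≠ 0 → Xor' (g ∈ Gpos) (-g ∈ Gpos))

local notation "B" => ((Bool × Bool) ⊕ {h : G // h ∈ Gpos})

lemma sig_zero : sig Gpos hpart 0 =
    Finsupp.single (Sum.inl (false, false)) 1 + Finsupp.single (Sum.inl (true, false)) 1 := by
  simp [sig]

lemma sig_neg (x : G) : sig Gpos hpart (-x) = sig Gpos hpart x := by
  by_cases hx : x = 0
  · subst hx; simp
  · rw [sig, sig, dif_neg hx, dif_neg (neg_ne_zero.mpr hx)]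
    have hv : (if -x ∈ Gpos then -x else - -x) = (if x ∈ Gpos then x else -x) := by
      by_cases h : x ∈ Gpos
      · have hn : -x ∉ Gpos := by
          rcases hpart.2 x hx with h' | h'
          · exact h'.2
          · exact absurd h h'.2
        rw [if_pos h, if_neg hn, neg_neg]
      · have hn : -x ∈ Gpos := by
          rcases hpart.2 x hx with h' | h'
          · exact absurd h'.1 h
          · exact h'.1
        rw [if_neg h, if_pos hn]
    exact congrArg (fun v => Finsupp.single v (1:ℤ)) (congrArg Sum.inr (Subtype.ext hv))

lemma sig_of_pos {h : G} (hh : h ∈ Gpos) :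
    sig Gpos hpart h = Finsupp.single (Sum.inr ⟨h, hh⟩) 1 := by
  have hne : h ≠ 0 := fun e => hpart.1 (e ▸ hh)
  rw [sig, dif_neg hne]
  exact congrArg (fun v => Finsupp.single v (1:ℤ))
    (congrArg Sum.inr (Subtype.ext (if_pos hh)))

lemma bmul_comm (a b : B) : bmul Gpos hpart a b = bmul Gpos hpart b a := by
  rcases a with ⟨a1, a2⟩ | g <;> rcases b with ⟨b1, b2⟩ | h
  · cases a2 <;> cases b2 <;> simp [bmul, Bool.xor_comm]
  · cases a2 <;> simp [bmul]
  · cases b2 <;> simp [bmul]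
  · show sig Gpos hpart ((g:G) + h) + sig Gpos hpart ((g:G) - h)
        = sig Gpos hpart ((h:G) + g) + sig Gpos hpart ((h:G) - g)
    rw [show (h:G) - g = -((g:G) - h) by abel, sig_neg, add_comm (g:G) (h:G)]

lemma mul_comm' (x y : B →₀ ℤ) : mul Gpos hpart x y = mul Gpos hpart y x := by
  unfold mul
  rw [Finsupp.sum_comm]
  apply Finsupp.sum_congr
  intro a _
  apply Finsupp.sum_congr
  intro b _
  rw [bmul_comm, mul_comm]

lemma bmul_one (b : B) : bmul Gpos hpart (Sum.inl (false, false)) b = Finsupp.single b 1 := by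
  rcases b with ⟨b1, b2⟩ | h <;> simp [bmul]

lemma one_mul' (x : B →₀ ℤ) :
    mul Gpos hpart (Finsupp.single (Sum.inl (false, false)) 1) x = x := by
  induction x using Finsupp.induction_linear with
  | zero => exact mul_zero' _ _ _
  | add f g hf hg => rw [mul_add' , hf, hg]
  | single b n => rw [mul_single_single, bmul_one]; simp

end MPFusion

set_option linter.unusedSectionVars false
namespace MPFusion

variable {G : Type*} [AddCommGroup G] [DecidableEq G] [Fintype G]
variable (Gpos : Finset G)
    (hpart : (0 : G) ∉ Gpos ∧ ∀ g : G, g ≠ 0 → Xor' (g ∈ Gpos) (-g ∈ Gpos))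

local notation "B" => ((Bool × Bool) ⊕ {h : G // h ∈ Gpos})

include hpart

lemma exists_pos (x : G) (hx : x ≠ 0) :
    ∃ (x' : G) (hx' : x' ∈ Gpos),
      sig Gpos hpart x = Finsupp.single (Sum.inr ⟨x', hx'⟩) 1 ∧ (x' = x ∨ x' = -x) := by
  refine ⟨if x ∈ Gpos then x else -x, ?_, ?_, ?_⟩
  · split_ifs with h
    · exact h
    · rcases hpart.2 x hx with h' | h'
      · exact absurd h'.1 h
      · exact h'.1
  · rw [sig, dif_neg hx]
  · split_ifs
    · left; rfl
    · right; rfl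

lemma sum_univ_part {M : Type*} [AddCommMonoid M] (F : G → M) :
    ∑ x : G, F x = F 0 + ∑ g ∈ Gpos, F g + ∑ g ∈ Gpos, F (-g) := by
  have h0 : (0 : G) ∉ Gpos ∪ Gpos.image (fun g => -g) := by
    simp only [Finset.mem_union, Finset.mem_image, not_or]
    refine ⟨hpart.1, ?_⟩
    rintro ⟨g, hg, hg0⟩
    exact hpart.1 (by rwa [show g = 0 by simpa using congrArg Neg.neg hg0] at hg)
  have hdisj : Disjoint Gpos (Gpos.image (fun g => -g)) := by
    rw [Finset.disjoint_left]
    rintro x hx hx'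
    simp only [Finset.mem_image] at hx'
    obtain ⟨g, hg, rfl⟩ := hx'
    have hgne : g ≠ 0 := fun e => hpart.1 (e ▸ hg)
    rcases hpart.2 g hgne with h' | h'
    · exact h'.2 hx
    · exact h'.2 hg
  have huniv : (Finset.univ : Finset G) = insert 0 (Gpos ∪ Gpos.image (fun g => -g)) := by
    ext x
    simp only [Finset.mem_univ, true_iff, Finset.mem_insert, Finset.mem_union,
      Finset.mem_image]
    by_cases hx : x = 0
    · exact Or.inl hx
    · rcases hpart.2 x hx with h' | h'
      · exact Or.inr (Or.inl h'.1)
      · exact Or.inr (Or.inr ⟨-x, h'.1, neg_neg x⟩)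
  rw [huniv, Finset.sum_insert h0, Finset.sum_union hdisj,
    Finset.sum_image (fun a _ b _ h => neg_injective h), add_assoc]

lemma sum_pos_sig :
    ∑ g ∈ Gpos, sig Gpos hpart g
      = ∑ h : {h : G // h ∈ Gpos}, Finsupp.single (Sum.inr h) (1:ℤ) := by
  rw [← Finset.sum_coe_sort Gpos (fun g => sig Gpos hpart g)]
  apply Finset.sum_congr rfl
  intro g _
  rw [sig_of_pos Gpos hpart g.2]

lemma sum_sig_all :
    ∑ x : G, sig Gpos hpart x
      = sig Gpos hpart 0
        + ∑ h : {h : G // h ∈ Gpos}, Finsupp.single (Sum.inr h) (1:ℤ)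
        + ∑ h : {h : G // h ∈ Gpos}, Finsupp.single (Sum.inr h) (1:ℤ) := by
  rw [sum_univ_part Gpos hpart (sig Gpos hpart)]
  rw [show ∑ g ∈ Gpos, sig Gpos hpart (-g) = ∑ g ∈ Gpos, sig Gpos hpart g from
    Finset.sum_congr rfl fun g _ => sig_neg Gpos hpart g]
  rw [sum_pos_sig]

lemma sum_sig_shift (c : G) :
    ∑ x : G, sig Gpos hpart (x + c) = ∑ x : G, sig Gpos hpart x :=
  Fintype.sum_equiv (Equiv.addRight c) _ _ (fun _ => rfl)

lemma key_sum (c : G) (hc : c ∈ Gpos) :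
    Finsupp.single (Sum.inr ⟨c, hc⟩) (1:ℤ)
      + ∑ g : {h : G // h ∈ Gpos}, (sig Gpos hpart (↑g + c) + sig Gpos hpart (↑g - c))
    = sig Gpos hpart 0
        + ∑ h : {h : G // h ∈ Gpos}, Finsupp.single (Sum.inr h) (1:ℤ)
        + ∑ h : {h : G // h ∈ Gpos}, Finsupp.single (Sum.inr h) (1:ℤ) := by
  have h1 : ∑ x : G, sig Gpos hpart (x + c)
      = sig Gpos hpart 0
        + ∑ h : {h : G // h ∈ Gpos}, Finsupp.single (Sum.inr h) (1:ℤ)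
        + ∑ h : {h : G // h ∈ Gpos}, Finsupp.single (Sum.inr h) (1:ℤ) := by
    rw [sum_sig_shift, sum_sig_all]
  have h2 : ∑ x : G, sig Gpos hpart (x + c)
      = sig Gpos hpart c + ∑ g ∈ Gpos, sig Gpos hpart (g + c)
        + ∑ g ∈ Gpos, sig Gpos hpart (-g + c) := by
    rw [sum_univ_part Gpos hpart (fun x => sig Gpos hpart (x + c)), zero_add]
  have h3 : ∀ g : G, sig Gpos hpart (g - c) = sig Gpos hpart (-g + c) := by
    intro g
    rw [show g - c = -(-g + c) by abel, sig_neg]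
  calc Finsupp.single (Sum.inr ⟨c, hc⟩) (1:ℤ)
      + ∑ g : {h : G // h ∈ Gpos}, (sig Gpos hpart (↑g + c) + sig Gpos hpart (↑g - c))
      = sig Gpos hpart c + (∑ g : {h : G // h ∈ Gpos}, sig Gpos hpart (↑g + c)
          + ∑ g : {h : G // h ∈ Gpos}, sig Gpos hpart (↑g - c)) := by
        rw [sig_of_pos Gpos hpart hc, Finset.sum_add_distrib]
    _ = sig Gpos hpart c + ∑ g ∈ Gpos, sig Gpos hpart (g + c)
          + ∑ g ∈ Gpos, sig Gpos hpart (-g + c) := by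
        rw [Finset.sum_congr rfl (fun (g : {h : G // h ∈ Gpos}) _ => h3 (g : G)),
          Finset.sum_coe_sort Gpos (fun g => sig Gpos hpart (g + c)),
          Finset.sum_coe_sort Gpos (fun g => sig Gpos hpart (-g + c)), add_assoc]
    _ = _ := by rw [← h2, h1]

end MPFusion

set_option linter.unusedSectionVars false
namespace MPFusion

variable {G : Type*} [AddCommGroup G] [DecidableEq G] [Fintype G]
variable (Gpos : Finset G)
    (hpart : (0 : G) ∉ Gpos ∧ ∀ g : G, g ≠ 0 → Xor' (g ∈ Gpos) (-g ∈ Gpos))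

local notation "B" => ((Bool × Bool) ⊕ {h : G // h ∈ Gpos})

lemma sig_mul_sig (x y : G) :
    mul Gpos hpart (sig Gpos hpart x) (sig Gpos hpart y)
      = sig Gpos hpart (x + y) + sig Gpos hpart (x - y) := by
  by_cases hx : x = 0
  · subst hx
    by_cases hy : y = 0
    · subst hy
      rw [sig_zero, add_mul', mul_add', mul_add', mul_single_one, mul_single_one,
        mul_single_one, mul_single_one]
      simp only [add_zero, sub_zero, sig_zero]
      simp [bmul]
      abel
    · obtain ⟨y', hy', hsig, _⟩ := exists_pos Gpos hpart y hy
      rw [sig_zero, hsig, add_mul', mul_single_one, mul_single_one, zero_add, zero_sub,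
        sig_neg, hsig]
      simp [bmul]
  · by_cases hy : y = 0
    · subst hy
      obtain ⟨x', hx', hsig, _⟩ := exists_pos Gpos hpart x hx
      rw [hsig, sig_zero, mul_add', mul_single_one, mul_single_one, add_zero, sub_zero,
        hsig]
      simp [bmul]
    · obtain ⟨x', hx', hsigx, hvx⟩ := exists_pos Gpos hpart x hx
      obtain ⟨y', hy', hsigy, hvy⟩ := exists_pos Gpos hpart y hy
      rw [hsigx, hsigy, mul_single_one]
      show sig Gpos hpart (x' + y') + sig Gpos hpart (x' - y') = _
      rcases hvx with h | h <;> rcases hvy with h2 | h2 <;> rw [h, h2]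
      · rw [show x + -y = x - y by abel, show x - -y = x + y by abel, add_comm]
      · rw [show -x + y = -(x - y) by abel, sig_neg, show -x - y = -(x + y) by abel,
          sig_neg, add_comm]
      · rw [show -x + -y = -(x + y) by abel, sig_neg, show -x - -y = -(x - y) by abel,
          sig_neg]

lemma alpha_mul_sig (a : Bool) (x : G) :
    mul Gpos hpart (Finsupp.single (Sum.inl (a, false)) 1) (sig Gpos hpart x)
      = sig Gpos hpart x := by
  by_cases hx : x = 0
  · subst hx
    rw [sig_zero, mul_add', mul_single_one, mul_single_one]
    cases a <;> simp [bmul] <;> abel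
  · obtain ⟨x', hx', hsig, _⟩ := exists_pos Gpos hpart x hx
    rw [hsig, mul_single_one]
    simp [bmul]

lemma rho_mul_sig (a : Bool) (x : G) :
    mul Gpos hpart (Finsupp.single (Sum.inl (a, true)) 1) (sig Gpos hpart x)
      = Finsupp.single (Sum.inl (false, true)) 1 + Finsupp.single (Sum.inl (true, true)) 1 := by
  by_cases hx : x = 0
  · subst hx
    rw [sig_zero, mul_add', mul_single_one, mul_single_one]
    cases a <;> simp [bmul] <;> abel
  · obtain ⟨x', hx', hsig, _⟩ := exists_pos Gpos hpart x hx
    rw [hsig, mul_single_one]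
    simp [bmul]

end MPFusion

set_option linter.unusedSectionVars false
set_option maxHeartbeats 1000000
namespace MPFusion

variable {G : Type*} [AddCommGroup G] [DecidableEq G] [Fintype G]
variable (Gpos : Finset G)
    (hpart : (0 : G) ∉ Gpos ∧ ∀ g : G, g ≠ 0 → Xor' (g ∈ Gpos) (-g ∈ Gpos))

local notation "B" => ((Bool × Bool) ⊕ {h : G // h ∈ Gpos})
local notation "SS" => ∑ h : {h : G // h ∈ Gpos}, Finsupp.single (Sum.inr h (α := Bool × Bool)) (1:ℤ)
local notation "PP" => Finsupp.single (Sum.inl (false, true) : ((Bool × Bool) ⊕ {h : G // h ∈ Gpos})) (1:ℤ) + Finsupp.single (Sum.inl (true, true) : ((Bool × Bool) ⊕ {h : G // h ∈ Gpos})) (1:ℤ)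

lemma sig_coe (h : {h : G // h ∈ Gpos}) :
    sig Gpos hpart (h : G) = Finsupp.single (Sum.inr h) 1 := by
  rw [sig_of_pos Gpos hpart h.2]

lemma h_e_SS (a1 : Bool) :
    mul Gpos hpart (Finsupp.single (Sum.inl (a1, false)) 1) SS = SS := by
  rw [mul_sum']
  apply Finset.sum_congr rfl
  intro h _
  rw [mul_single_one]
  simp [bmul]

lemma h_r_SS (a1 : Bool) :
    mul Gpos hpart (Finsupp.single (Sum.inl (a1, true)) 1) SS
      = ∑ _h : {h : G // h ∈ Gpos}, PP := by
  rw [mul_sum']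
  apply Finset.sum_congr rfl
  intro h _
  rw [mul_single_one]
  simp [bmul]

lemma h_s_SS (g : {h : G // h ∈ Gpos}) :
    mul Gpos hpart (Finsupp.single (Sum.inr g) 1) SS
      = ∑ h : {h : G // h ∈ Gpos}, (sig Gpos hpart ((h : G) + g) + sig Gpos hpart ((h : G) - g)) := by
  rw [mul_sum']
  apply Finset.sum_congr rfl
  intro h _
  rw [mul_single_one]
  show sig Gpos hpart ((g : G) + h) + sig Gpos hpart ((g : G) - h) = _
  rw [add_comm (g : G) (h : G), show (g : G) - h = -((h : G) - g) by abel, sig_neg]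

lemma h_P_e (c1 : Bool) :
    mul Gpos hpart PP (Finsupp.single (Sum.inl (c1, false)) 1) = PP := by
  rw [add_mul', mul_single_one, mul_single_one]
  cases c1 <;> simp [bmul] <;> abel

lemma h_P_r (c1 : Bool) :
    mul Gpos hpart PP (Finsupp.single (Sum.inl (c1, true)) 1)
      = sig Gpos hpart 0 + (SS + SS) := by
  rw [add_mul', mul_single_one, mul_single_one, sig_zero]
  cases c1 <;> simp [bmul] <;> abel

lemma h_P_s (k : {h : G // h ∈ Gpos}) :
    mul Gpos hpart PP (Finsupp.single (Sum.inr k) 1) = PP + PP := by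
  rw [add_mul', mul_single_one, mul_single_one]
  simp [bmul]

lemma h_r_P (a1 : Bool) :
    mul Gpos hpart (Finsupp.single (Sum.inl (a1, true)) 1) PP
      = sig Gpos hpart 0 + (SS + SS) := by
  rw [mul_add', mul_single_one, mul_single_one, sig_zero]
  cases a1 <;> simp [bmul] <;> abel

lemma h_e_P (a1 : Bool) :
    mul Gpos hpart (Finsupp.single (Sum.inl (a1, false)) 1) PP = PP := by
  rw [mul_add', mul_single_one, mul_single_one]
  cases a1 <;> simp [bmul] <;> abel

lemma h_s_P (g : {h : G // h ∈ Gpos}) :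
    mul Gpos hpart (Finsupp.single (Sum.inr g) 1) PP = PP + PP := by
  rw [mul_add', mul_single_one, mul_single_one]
  simp [bmul]

lemma key_sum' (g : {h : G // h ∈ Gpos}) :
    Finsupp.single (Sum.inr g) (1:ℤ)
      + ∑ h : {h : G // h ∈ Gpos}, (sig Gpos hpart ((h : G) + g) + sig Gpos hpart ((h : G) - g))
      = sig Gpos hpart 0 + (SS + SS) := by
  have := key_sum Gpos hpart (g : G) g.2
  rw [add_assoc] at this
  exact this

end MPFusion

set_option linter.unusedSectionVars false
set_option maxHeartbeats 1000000
namespace MPFusion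

variable {G : Type*} [AddCommGroup G] [DecidableEq G] [Fintype G]
variable (Gpos : Finset G)
    (hpart : (0 : G) ∉ Gpos ∧ ∀ g : G, g ≠ 0 → Xor' (g ∈ Gpos) (-g ∈ Gpos))

local notation "B" => ((Bool × Bool) ⊕ {h : G // h ∈ Gpos})
local notation "SS" => ∑ h : {h : G // h ∈ Gpos}, Finsupp.single (Sum.inr h (α := Bool × Bool)) (1:ℤ)
local notation "PP" => Finsupp.single (Sum.inl (false, true) : ((Bool × Bool) ⊕ {h : G // h ∈ Gpos})) (1:ℤ) + Finsupp.single (Sum.inl (true, true) : ((Bool × Bool) ⊕ {h : G // h ∈ Gpos})) (1:ℤ)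

lemma h_sig_e (c1 : Bool) (x : G) :
    mul Gpos hpart (sig Gpos hpart x) (Finsupp.single (Sum.inl (c1, false)) 1)
      = sig Gpos hpart x := by
  rw [mul_comm', alpha_mul_sig]

lemma h_sig_r (c1 : Bool) (x : G) :
    mul Gpos hpart (sig Gpos hpart x) (Finsupp.single (Sum.inl (c1, true)) 1) = PP := by
  rw [mul_comm', rho_mul_sig]

lemma key (a b c : B) :
    mul Gpos hpart (bmul Gpos hpart a b) (Finsupp.single c 1)
      = mul Gpos hpart (Finsupp.single a 1) (bmul Gpos hpart b c) := by
  obtain ⟨a1, a2⟩ | g := a <;> obtain ⟨b1, b2⟩ | h := b <;> obtain ⟨c1, c2⟩ | k := c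
  · -- inl inl inl
    cases a2 <;> cases b2 <;> cases c2 <;>
      simp [bmul, mul_single_one, mul_add', add_mul', mul_sum', sum_mul',
        h_e_SS, h_r_SS, Bool.xor_assoc] <;> abel
  · -- inl inl inr
    cases a2 <;> cases b2
    · simp [bmul, mul_single_one]
    · -- a2 = false, b2 = true : LHS ρ-type * σ = PP ; RHS α^a1 * PP
      simp [bmul, mul_single_one, h_e_P]
    · simp [bmul, mul_single_one]
    · -- a2 = true, b2 = true
      have l1 : mul Gpos hpart (bmul Gpos hpart (Sum.inl (a1, true)) (Sum.inl (b1, true)))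
          (Finsupp.single (Sum.inr k) 1)
          = Finsupp.single (Sum.inr k) 1
            + ∑ h : {h : G // h ∈ Gpos},
                (sig Gpos hpart ((h : G) + k) + sig Gpos hpart ((h : G) - k)) := by
        simp [bmul, add_mul', sum_mul', mul_single_one]
      rw [l1, key_sum']
      simp [bmul, h_r_P]
  · -- inl inr inl
    cases a2 <;> cases c2 <;>
      simp [bmul, mul_single_one, h_e_P, h_P_e, h_P_r, h_r_P]
  · -- inl inr inr
    cases a2 <;>
      simp [bmul, mul_single_one, mul_add', alpha_mul_sig, rho_mul_sig, h_P_s, h_r_P]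
  · -- inr inl inl
    cases b2 <;> cases c2
    · simp [bmul, mul_single_one]
    · simp [bmul, mul_single_one]
    · simp [bmul, mul_single_one, h_P_e]
    · -- b2 = c2 = true
      have hR : mul Gpos hpart (Finsupp.single (Sum.inr g) 1)
          (bmul Gpos hpart (Sum.inl (b1, true)) (Sum.inl (c1, true)))
          = Finsupp.single (Sum.inr g) 1
            + ∑ h : {h : G // h ∈ Gpos},
                (sig Gpos hpart ((h : G) + g) + sig Gpos hpart ((h : G) - g)) := by
        have : bmul Gpos hpart (Sum.inl (b1, true)) (Sum.inl (c1, true))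
            = Finsupp.single (Sum.inl (xor b1 c1, false)) 1 + SS := by simp [bmul]
        rw [this, mul_add', mul_single_one, h_s_SS]
        simp [bmul]
      rw [hR, key_sum']
      simp [bmul, h_P_r]
  · -- inr inl inr
    cases b2
    · simp [bmul, mul_single_one]
    · simp [bmul, mul_single_one, h_P_s, h_s_P]
  · -- inr inr inl
    cases c2
    · rw [show bmul Gpos hpart (Sum.inr g) (Sum.inr h)
          = sig Gpos hpart ((g : G) + h) + sig Gpos hpart ((g : G) - h) from rfl,
        add_mul', h_sig_e, h_sig_e]
      simp [bmul, mul_single_one]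
    · rw [show bmul Gpos hpart (Sum.inr g) (Sum.inr h)
          = sig Gpos hpart ((g : G) + h) + sig Gpos hpart ((g : G) - h) from rfl,
        add_mul', h_sig_r, h_sig_r]
      simp [bmul, mul_single_one, h_s_P]
  · -- inr inr inr
    show mul Gpos hpart (sig Gpos hpart ((g : G) + h) + sig Gpos hpart ((g : G) - h))
        (Finsupp.single (Sum.inr k) 1)
      = mul Gpos hpart (Finsupp.single (Sum.inr g) 1)
        (sig Gpos hpart ((h : G) + k) + sig Gpos hpart ((h : G) - k))
    rw [← sig_coe Gpos hpart k, ← sig_coe Gpos hpart g, add_mul', mul_add',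
      sig_mul_sig, sig_mul_sig, sig_mul_sig, sig_mul_sig,
      show (g : G) - ((h : G) + k) = (g : G) - h - k by abel,
      show (g : G) + ((h : G) - k) = (g : G) + h - k by abel,
      show (g : G) - ((h : G) - k) = (g : G) - h + k by abel,
      show (g : G) + ((h : G) + k) = (g : G) + h + k by abel]
    abel

end MPFusion

set_option linter.unusedSectionVars false
namespace MPFusion

variable {G : Type*} [AddCommGroup G] [DecidableEq G] [Fintype G]
variable (Gpos : Finset G)
    (hpart : (0 : G) ∉ Gpos ∧ ∀ g : G, g ≠ 0 → Xor' (g ∈ Gpos) (-g ∈ Gpos))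

local notation "B" => ((Bool × Bool) ⊕ {h : G // h ∈ Gpos})

lemma assoc' (x y z : B →₀ ℤ) :
    mul Gpos hpart (mul Gpos hpart x y) z = mul Gpos hpart x (mul Gpos hpart y z) := by
  induction z using Finsupp.induction_linear with
  | zero => simp [mul_zero', zero_mul']
  | add f g hf hg => rw [mul_add', mul_add', hf, hg, mul_add']
  | single c n =>
    induction y using Finsupp.induction_linear with
    | zero => simp [mul_zero', zero_mul']
    | add f g hf hg => rw [mul_add', add_mul', add_mul', hf, hg, mul_add']
    | single b m =>
      induction x using Finsupp.induction_linear with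
      | zero => simp [mul_zero', zero_mul']
      | add f g hf hg => rw [add_mul', add_mul', add_mul', hf, hg]
      | single a l =>
        rw [mul_single_single, mul_single_single, smul_mul', mul_smul'',
          show Finsupp.single c n = n • Finsupp.single c (1:ℤ) by simp,
          show Finsupp.single a l = l • Finsupp.single a (1:ℤ) by simp,
          mul_smul'', smul_mul', key, smul_smul, smul_smul]
        congr 1
        ring

include hpart in
lemma card_eq :
    Fintype.card ((Bool × Bool) ⊕ {h : G // h ∈ Gpos}) = (Fintype.card G + 7) / 2 := by
  have h1 : Fintype.card G = 1 + Gpos.card + Gpos.card := by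
    have := sum_univ_part Gpos hpart (fun _ => (1:ℕ))
    simpa using this
  rw [Fintype.card_sum, Fintype.card_prod, Fintype.card_bool, Fintype.card_coe, h1]
  omega

end MPFusion




/-- For a finite abelian group `G` of odd order with a non-degenerate
symmetric bicharacter `b` and a choice of positives `G = G₊ ⊔ {0} ⊔ (−G₊)`, the
generalized metaplectic fusion ring with basis `{1, α, ρ, αρ} ∪ {σ_h : h ∈ G₊}` and the
stated fusion rules is a commutative associative unital ring of rank `(|G|+7)/2`. -/
theorem stmt18 {G : Type*} [AddCommGroup G] [Fintype G] [DecidableEq G]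
    (hodd : Odd (Fintype.card G))
    (b : G → G → Circle)
    (hsym : ∀ g h, b g h = b h g)
    (hbi : ∀ g h k, b (g + h) k = b g k * b h k)
    (hnd : ∀ g, (∀ h, b g h = 1) → g = 0)
    (Gpos : Finset G)
    (hpart : (0 : G) ∉ Gpos ∧ ∀ g : G, g ≠ 0 → Xor' (g ∈ Gpos) (-g ∈ Gpos)) :
    (∀ x y, MPFusion.mul Gpos hpart x y = MPFusion.mul Gpos hpart y x) ∧
    (∀ x y z, MPFusion.mul Gpos hpart (MPFusion.mul Gpos hpart x y) z =
      MPFusion.mul Gpos hpart x (MPFusion.mul Gpos hpart y z)) ∧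
    (∀ x, MPFusion.mul Gpos hpart (Finsupp.single (Sum.inl (false, false)) 1) x = x) ∧
    (∀ x, MPFusion.mul Gpos hpart x (Finsupp.single (Sum.inl (false, false)) 1) = x) ∧
    Fintype.card ((Bool × Bool) ⊕ {h : G // h ∈ Gpos}) = (Fintype.card G + 7) / 2 := by
  refine ⟨MPFusion.mul_comm' Gpos hpart, MPFusion.assoc' Gpos hpart,
    MPFusion.one_mul' Gpos hpart, fun x => ?_, MPFusion.card_eq Gpos hpart⟩
  rw [MPFusion.mul_comm', MPFusion.one_mul']
end
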